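/- For all ordinals α, γ < ε₀ and x ∈ ℕ, the Hardy hierarchy satisfies h^{γ+α}(x) = h^γ(h^α(x)). -/

import Mathlib

/-- Ordinal terms below ε₀: a term is a list of exponents,
`cons β γ` denoting ω^β + γ. -/
inductive OT : Type
  | nil : OT
  | cons : OT → OT → OT
deriving DecidableEq

namespace OT

/-- The term 1 = ω^0. -/
def one : OT := cons nil nil

/-- Syntactic concatenation (direct sum) of ordinal terms. -/
def add : OT → OT → OT
  | nil, b => b
  | cons e r, b => cons e (add r b)

/-- A term ω^{β₁}+...+ω^{β_m} is a successor iff m > 0 and β_m = 0. -/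
def isSucc : OT → Bool
  | nil => false
  | cons e nil => e == nil
  | cons _ (cons e r) => isSucc (cons e r)

/-- Remove the last summand ω^0 of a successor term. -/
def pred : OT → OT
  | nil => nil
  | cons _ nil => nil
  | cons e (cons e' r) => cons e (pred (cons e' r))

/-- Limit terms. -/
def isLim (a : OT) : Prop := a ≠ nil ∧ isSucc a = false

/-- ω^β · n as an ordinal term. -/
def rep : ℕ → OT → OT
  | 0, _ => nil
  | n + 1, β => cons β (rep n β)

/-- The standard assignment of fundamental sequences (with ω_x = x+1):
(γ+ω^{β+1})_x = γ+ω^β·(x+1) and (γ+ω^λ)_x = γ+ω^{λ_x}. -/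
def fseq : OT → ℕ → OT
  | nil, _ => nil
  | cons β nil, x =>
      if β = nil then nil
      else if isSucc β then rep (x + 1) (pred β)
      else cons (fseq β x) nil
  | cons β (cons e r), x => cons β (fseq (cons e r) x)

/-- Syntactic ordering of terms (on CNF terms this is the ordinal ordering). -/
def lt : OT → OT → Prop
  | _, nil => False
  | nil, cons _ _ => True
  | cons a r, cons b s => lt a b ∨ (a = b ∧ lt r s)

def le (a b : OT) : Prop := lt a b ∨ a = b

/-- Cantor normal form: exponents weakly decreasing, all in CNF. -/
def isCNF : OT → Prop
  | nil => True
  | cons b nil => isCNF b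
  | cons b (cons e r) => isCNF b ∧ le e b ∧ isCNF (cons e r)

/-- Number of occurrences of the exponent β in a term. -/
def count (β : OT) : OT → ℕ
  | nil => 0
  | cons b r => (if b = β then 1 else 0) + count β r

/-- k-lean: every coefficient (at every level) is ≤ k. -/
def leanOrd (k : ℕ) : OT → Prop
  | nil => True
  | cons b r => count b (cons b r) ≤ k ∧ leanOrd k b ∧ leanOrd k r

end OT

/-- Pointwise-at-x ordering: smallest transitive relation with
α ⊏_x α+1 and λ_x ⊏_x λ. -/
inductive Ptw (x : ℕ) : OT → OT → Prop
  | succ (a : OT) : Ptw x a (OT.add a OT.one)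
  | lim (l : OT) : OT.isLim l → Ptw x (OT.fseq l x) l
  | trans {a b c : OT} : Ptw x a b → Ptw x b c → Ptw x a c


namespace OT

theorem add_nil (g : OT) : add g nil = g := by
  induction g with
  | nil => rfl
  | cons e r ihe ihr => simp [add, ihr]

theorem add_ne_nil (g a : OT) (ha : a ≠ nil) : add g a ≠ nil := by
  cases g with
  | nil => simpa [add]
  | cons e r => simp [add]

theorem isSucc_add (g a : OT) (ha : a ≠ nil) : isSucc (add g a) = isSucc a := by
  induction g with
  | nil => rfl
  | cons e r ihe ihr =>
    have h1 : add r a ≠ nil := add_ne_nil r a ha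
    show isSucc (cons e (add r a)) = isSucc a
    cases hra : add r a with
    | nil => exact absurd hra h1
    | cons e' r' =>
      rw [← hra, show isSucc (cons e (add r a)) = isSucc (add r a) by rw [hra]; rfl, ihr]

theorem pred_add (g a : OT) (ha : a ≠ nil) : pred (add g a) = add g (pred a) := by
  induction g with
  | nil => rfl
  | cons e r ihe ihr =>
    have h1 : add r a ≠ nil := add_ne_nil r a ha
    show pred (cons e (add r a)) = cons e (add r (pred a))
    cases hra : add r a with
    | nil => exact absurd hra h1
    | cons e' r' =>
      rw [← hra, show pred (cons e (add r a)) = cons e (pred (add r a)) by rw [hra]; rfl, ihr]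

theorem fseq_add (g a : OT) (ha : a ≠ nil) (x : ℕ) :
    fseq (add g a) x = add g (fseq a x) := by
  induction g with
  | nil => rfl
  | cons e r ihe ihr =>
    have h1 : add r a ≠ nil := add_ne_nil r a ha
    show fseq (cons e (add r a)) x = cons e (add r (fseq a x))
    cases hra : add r a with
    | nil => exact absurd hra h1
    | cons e' r' =>
      rw [← hra, show fseq (cons e (add r a)) x = cons e (fseq (add r a) x) by rw [hra]; rfl, ihr]

open Ordinal in
noncomputable def val : OT → Ordinal.{0}
  | nil => 0
  | cons e r => omega0 ^ val e + val r

open Ordinal in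
theorem val_rep (n : ℕ) (b : OT) : val (rep n b) = omega0 ^ val b * n := by
  induction n with
  | zero => simp [rep, val]
  | succ n ih =>
    show val (cons b (rep n b)) = _
    rw [val, ih]
    have h1 : (1 : Ordinal) + (n : ℕ) = ((n : ℕ) : Ordinal) + 1 := by norm_cast; omega
    calc omega0 ^ val b + omega0 ^ val b * (n : ℕ)
        = omega0 ^ val b * (1 + (n : ℕ)) := by rw [mul_add, mul_one]
      _ = omega0 ^ val b * (((n : ℕ) : Ordinal) + 1) := by rw [h1]
      _ = omega0 ^ val b * ((n + 1 : ℕ) : Ordinal) := by push_cast; rfl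

open Ordinal in
theorem val_pred (a : OT) (ha : isSucc a = true) : val (pred a) + 1 = val a := by
  induction a with
  | nil => simp [isSucc] at ha
  | cons e r ihe ihr =>
    cases r with
    | nil =>
      have : e = nil := by simpa [isSucc] using ha
      subst this
      simp [pred, val]
    | cons e' r' =>
      have ha' : isSucc (cons e' r') = true := ha
      show val (cons e (pred (cons e' r'))) + 1 = _
      rw [val, val, add_assoc, ihr ha']

open Ordinal in
theorem val_fseq (a : OT) (ha : isLim a) (x : ℕ) : val (fseq a x) < val a := by
  induction a with
  | nil => exact absurd rfl ha.1
  | cons e r ihe ihr =>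
    cases r with
    | nil =>
      have he : e ≠ nil := by
        intro hcon
        subst hcon
        have h2 : isSucc (cons nil nil) = true := rfl
        rw [ha.2] at h2
        simp at h2
      by_cases hs : isSucc e = true
      · show val (fseq (cons e nil) x) < val (cons e nil)
        rw [show fseq (cons e nil) x = rep (x + 1) (pred e) by simp [fseq, he, hs]]
        rw [val_rep, val, val]
        have hv : val e = val (pred e) + 1 := (val_pred e hs).symm
        rw [hv, opow_add, opow_one, add_zero]
        exact (mul_lt_mul_iff_right₀ (opow_pos _ omega0_pos)).2 (nat_lt_omega0 (x + 1))
      · have hle : isLim e := ⟨he, by simpa using hs⟩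
        show val (fseq (cons e nil) x) < val (cons e nil)
        rw [show fseq (cons e nil) x = cons (fseq e x) nil by simp [fseq, he, hs]]
        simp only [val, add_zero]
        exact (opow_lt_opow_iff_right one_lt_omega0).2 (ihe hle)
    | cons e' r' =>
      have hr : isLim (cons e' r') := ⟨by simp, ha.2⟩
      show val (cons e (fseq (cons e' r') x)) < val (cons e (cons e' r'))
      rw [val, val]
      exact add_lt_add_right (ihr hr) _

open Ordinal in
theorem val_pred_lt (a : OT) (ha : isSucc a = true) : val (pred a) < val a := by
  conv_rhs => rw [← val_pred a ha]
  exact lt_add_one _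

theorem hardy_add (h : ℕ → ℕ) (H : OT → ℕ → ℕ)
    (hH0 : ∀ x, H OT.nil x = x)
    (hHs : ∀ a x, OT.isSucc a = true → H a x = H (OT.pred a) (h x))
    (hHl : ∀ a x, OT.isLim a → H a x = H (OT.fseq a x) x) :
    ∀ (a g : OT) (x : ℕ), H (OT.add g a) x = H g (H a x)
  | a, g, x => by
    by_cases hnil : a = nil
    · subst hnil
      rw [add_nil, hH0]
    · by_cases hs : isSucc a = true
      · have h1 : isSucc (add g a) = true := by rw [isSucc_add g a hnil]; exact hs
        rw [hHs _ x h1, pred_add g a hnil,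
          hardy_add h H hH0 hHs hHl (pred a) g (h x), ← hHs a x hs]
      · have hlim : isLim a := ⟨hnil, by simpa using hs⟩
        have h1 : isLim (add g a) := ⟨add_ne_nil g a hnil, by
          rw [isSucc_add g a hnil]; simpa using hs⟩
        rw [hHl _ x h1, fseq_add g a hnil,
          hardy_add h H hH0 hHs hHl (fseq a x) g x, ← hHl a x hlim]
  termination_by a => val a
  decreasing_by
  · exact val_pred_lt a hs
  · exact val_fseq a hlim x

end OT

/-- Hardy hierarchy: h^{γ+α}(x) = h^γ(h^α(x)), where γ+α is syntactic
concatenation of ordinal terms. -/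
theorem stmt13 (h : ℕ → ℕ) (H : OT → ℕ → ℕ)
    (hH0 : ∀ x, H OT.nil x = x)
    (hHs : ∀ a x, OT.isSucc a = true → H a x = H (OT.pred a) (h x))
    (hHl : ∀ a x, OT.isLim a → H a x = H (OT.fseq a x) x) :
    ∀ (g a : OT) (x : ℕ), H (OT.add g a) x = H g (H a x) := fun g a x =>
  OT.hardy_add h H hH0 hHs hHl a g x
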